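/- Fix c ≥ 1, n ≥ 1, and p ∈ N with 1 ≤ p < (c-1)n. Let λ := c + 1 + √(4c + p²/n²) and λ̄ := c + 1 - √(4c + p²/n²). Suppose a sequence (K_k)_{1≤k≤p} of positive reals satisfies K_1 = 2(c+1) and K_k ≤ λ + λ̄ - (1 - 3/(4k²-1)) λλ̄ / K_{k-1} for 2 ≤ k ≤ p. Then K_k ≤ (1 + 2√c/k²) λ for all 1 ≤ k ≤ p. -/

import Mathlib

lemma keyPoly (a b d : ℝ) (ha : 0 ≤ a) (hb : 0 ≤ b) (hd : 0 ≤ d) :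
    (0:ℝ) ≤ 360 + 222*d + 624*b + 440*b*d + 472*b^2 + 347*b^2*d + 192*b^3 + 130*b^3*d + 32*b^4 + 19*b^4*d + 960*a + 270*a*d + 1504*a*b + 468*a*b*d + 1008*a*b^2 + 324*a*b^2*d + 384*a*b^3 + 112*a*b^3*d + 64*a*b^4 + 16*a*b^4*d + 798*a^2 + 60*a^2*d + 1008*a^2*b + 64*a^2*b*d + 489*a^2*b^2 + 16*a^2*b^2*d + 158*a^2*b^3 + 29*a^2*b^4 + 270*a^3 + 228*a^3*b + 8*a^3*b^2 + 60*a^4 + 64*a^4*b + 16*a^4*b^2 - 16*a^3*b^3 := by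
  have hsq : (0:ℝ) ≤ 8*(a^2*b - a*b^2)^2 := by positivity
  have h000 : (0:ℝ) ≤ a^0*b^0*d^0 := by positivity
  have h001 : (0:ℝ) ≤ a^0*b^0*d^1 := by positivity
  have h010 : (0:ℝ) ≤ a^0*b^1*d^0 := by positivity
  have h011 : (0:ℝ) ≤ a^0*b^1*d^1 := by positivity
  have h020 : (0:ℝ) ≤ a^0*b^2*d^0 := by positivity
  have h021 : (0:ℝ) ≤ a^0*b^2*d^1 := by positivity
  have h030 : (0:ℝ) ≤ a^0*b^3*d^0 := by positivity
  have h031 : (0:ℝ) ≤ a^0*b^3*d^1 := by positivity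
  have h040 : (0:ℝ) ≤ a^0*b^4*d^0 := by positivity
  have h041 : (0:ℝ) ≤ a^0*b^4*d^1 := by positivity
  have h100 : (0:ℝ) ≤ a^1*b^0*d^0 := by positivity
  have h101 : (0:ℝ) ≤ a^1*b^0*d^1 := by positivity
  have h110 : (0:ℝ) ≤ a^1*b^1*d^0 := by positivity
  have h111 : (0:ℝ) ≤ a^1*b^1*d^1 := by positivity
  have h120 : (0:ℝ) ≤ a^1*b^2*d^0 := by positivity
  have h121 : (0:ℝ) ≤ a^1*b^2*d^1 := by positivity
  have h130 : (0:ℝ) ≤ a^1*b^3*d^0 := by positivity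
  have h131 : (0:ℝ) ≤ a^1*b^3*d^1 := by positivity
  have h140 : (0:ℝ) ≤ a^1*b^4*d^0 := by positivity
  have h141 : (0:ℝ) ≤ a^1*b^4*d^1 := by positivity
  have h200 : (0:ℝ) ≤ a^2*b^0*d^0 := by positivity
  have h201 : (0:ℝ) ≤ a^2*b^0*d^1 := by positivity
  have h210 : (0:ℝ) ≤ a^2*b^1*d^0 := by positivity
  have h211 : (0:ℝ) ≤ a^2*b^1*d^1 := by positivity
  have h220 : (0:ℝ) ≤ a^2*b^2*d^0 := by positivity
  have h221 : (0:ℝ) ≤ a^2*b^2*d^1 := by positivity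
  have h230 : (0:ℝ) ≤ a^2*b^3*d^0 := by positivity
  have h240 : (0:ℝ) ≤ a^2*b^4*d^0 := by positivity
  have h300 : (0:ℝ) ≤ a^3*b^0*d^0 := by positivity
  have h310 : (0:ℝ) ≤ a^3*b^1*d^0 := by positivity
  have h320 : (0:ℝ) ≤ a^3*b^2*d^0 := by positivity
  have h400 : (0:ℝ) ≤ a^4*b^0*d^0 := by positivity
  have h410 : (0:ℝ) ≤ a^4*b^1*d^0 := by positivity
  have h420 : (0:ℝ) ≤ a^4*b^2*d^0 := by positivity
  linarith [hsq, h000, h001, h010, h011, h020, h021, h030, h031, h040, h041, h100, h101, h110, h111, h120, h121, h130, h131, h140, h141, h200, h201, h210, h211, h220, h221, h230, h240, h300, h310, h320, h400, h410, h420]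


set_option maxHeartbeats 2000000 in
lemma keyIneq (u s kr : ℝ) (hu : 1 ≤ u) (hk : 1 ≤ kr) (hs : 2*u ≤ s)
    (hsu : s ≤ u^2 + 1) :
    (u^2+1+s) + (u^2+1-s)
      - (1 - 3/(4*(kr+1)^2-1)) * ((u^2+1+s)*(u^2+1-s)) / ((1 + 2*u/kr^2)*(u^2+1+s))
      ≤ (1 + 2*u/(kr+1)^2) * (u^2+1+s) := by
  have hkey := keyPoly (u-1) (kr-1) (s-2*u) (by linarith) (by linarith) (by linarith)
  have hlam : (0:ℝ) < u^2+1+s := by nlinarith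
  have hkr2 : (0:ℝ) < kr^2 := by positivity
  have hm2 : (0:ℝ) < (kr+1)^2 := by positivity
  have hD : (0:ℝ) < 4*(kr+1)^2-1 := by nlinarith
  have hM : (0:ℝ) < (1 + 2*u/kr^2)*(u^2+1+s) := by
    have : (0:ℝ) < 1 + 2*u/kr^2 := by positivity
    positivity
  rw [sub_le_iff_le_add, ← sub_le_iff_le_add', le_div_iff₀ hM]
  have hlamF : (0:ℝ) ≤ (u^2+1+s) *
        (360 + 222*(s-2*u) + 624*(kr-1) + 440*(kr-1)*(s-2*u) + 472*(kr-1)^2 + 347*(kr-1)^2*(s-2*u) + 192*(kr-1)^3 + 130*(kr-1)^3*(s-2*u) + 32*(kr-1)^4 + 19*(kr-1)^4*(s-2*u) + 960*(u-1) + 270*(u-1)*(s-2*u) + 1504*(u-1)*(kr-1) + 468*(u-1)*(kr-1)*(s-2*u) + 1008*(u-1)*(kr-1)^2 + 324*(u-1)*(kr-1)^2*(s-2*u) + 384*(u-1)*(kr-1)^3 + 112*(u-1)*(kr-1)^3*(s-2*u) + 64*(u-1)*(kr-1)^4 + 16*(u-1)*(kr-1)^4*(s-2*u) + 798*(u-1)^2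 + 60*(u-1)^2*(s-2*u) + 1008*(u-1)^2*(kr-1) + 64*(u-1)^2*(kr-1)*(s-2*u) + 489*(u-1)^2*(kr-1)^2 + 16*(u-1)^2*(kr-1)^2*(s-2*u) + 158*(u-1)^2*(kr-1)^3 + 29*(u-1)^2*(kr-1)^4 + 270*(u-1)^3 + 228*(u-1)^3*(kr-1) + 8*(u-1)^3*(kr-1)^2 + 60*(u-1)^4 + 64*(u-1)^4*(kr-1) + 16*(u-1)^4*(kr-1)^2 - 16*(u-1)^3*(kr-1)^3) :=
      mul_nonneg (le_of_lt hlam) hkey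
  have hkrne : kr ≠ 0 := by linarith
  have hDne : (4*(kr+1)^2-1) ≠ 0 := ne_of_gt hD
  field_simp
  have hD' : (0:ℝ) < (kr+1)^2*4-1 := by linarith
  rw [one_sub_div hD'.ne', mul_div_assoc', le_div_iff₀ hD']
  linarith [hlamF]

set_option maxHeartbeats 1000000 in
/-- First bound on the complex Wishart moment ratios: if `1 ≤ p < (c-1)n`,
`λ = c+1+√(4c+p²/n²)`, `λ̄ = c+1-√(4c+p²/n²)`, `K_1 = 2(c+1)` and
`K_k ≤ λ + λ̄ - (1 - 3/(4k²-1)) λλ̄ / K_{k-1}` for `2 ≤ k ≤ p`, then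
`K_k ≤ (1 + 2√c/k²) λ` for all `1 ≤ k ≤ p`. -/
theorem wishart_ratio_bound_large_k
    (c : ℝ) (hc : 1 ≤ c) (n : ℕ) (hn : 1 ≤ n) (p : ℕ) (hp : 1 ≤ p)
    (hpc : (p : ℝ) < (c - 1) * n)
    (K : ℕ → ℝ) (hKpos : ∀ k, 1 ≤ k → k ≤ p → 0 < K k)
    (hK1 : K 1 = 2 * (c + 1))
    (hrec : ∀ k, 2 ≤ k → k ≤ p →
      K k ≤ (c + 1 + Real.sqrt (4 * c + (p : ℝ) ^ 2 / (n : ℝ) ^ 2))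
            + (c + 1 - Real.sqrt (4 * c + (p : ℝ) ^ 2 / (n : ℝ) ^ 2))
            - (1 - 3 / (4 * (k : ℝ) ^ 2 - 1)) *
              ((c + 1 + Real.sqrt (4 * c + (p : ℝ) ^ 2 / (n : ℝ) ^ 2)) *
               (c + 1 - Real.sqrt (4 * c + (p : ℝ) ^ 2 / (n : ℝ) ^ 2))) / K (k - 1)) :
    ∀ k, 1 ≤ k → k ≤ p →
      K k ≤ (1 + 2 * Real.sqrt c / (k : ℝ) ^ 2) *
        (c + 1 + Real.sqrt (4 * c + (p : ℝ) ^ 2 / (n : ℝ) ^ 2)) := by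
  set s := Real.sqrt (4 * c + (p : ℝ) ^ 2 / (n : ℝ) ^ 2) with hs_def
  set u := Real.sqrt c with hu_def
  have hn0 : (0:ℝ) < n := by exact_mod_cast hn
  have hp0 : (0:ℝ) < p := by exact_mod_cast hp
  have hc0 : (0:ℝ) ≤ c := by linarith
  have hu1 : 1 ≤ u := by
    have h := Real.sqrt_le_sqrt hc
    rwa [Real.sqrt_one] at h
  have hu2 : u ^ 2 = c := Real.sq_sqrt hc0
  have harg : (0:ℝ) ≤ 4 * c + (p : ℝ) ^ 2 / (n : ℝ) ^ 2 := by positivity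
  have hs2 : s ^ 2 = 4 * c + (p : ℝ) ^ 2 / (n : ℝ) ^ 2 := Real.sq_sqrt harg
  have hsnn : 0 ≤ s := Real.sqrt_nonneg _
  have hsge : 2 * u ≤ s := by
    have h1 : (2 * u) ^ 2 ≤ s ^ 2 := by
      rw [hs2]
      have : (0:ℝ) ≤ (p : ℝ) ^ 2 / (n : ℝ) ^ 2 := by positivity
      nlinarith
    nlinarith
  have hsu : s ≤ u ^ 2 + 1 := by
    have hpn : (p : ℝ) ^ 2 / (n : ℝ) ^ 2 ≤ (c - 1) ^ 2 := by
      rw [div_le_iff₀ (by positivity)]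
      nlinarith
    have h2 : s ^ 2 ≤ (c + 1) ^ 2 := by rw [hs2]; nlinarith
    nlinarith
  have hslt : s < c + 1 := by
    have hpn : (p : ℝ) ^ 2 / (n : ℝ) ^ 2 < (c - 1) ^ 2 := by
      rw [div_lt_iff₀ (by positivity)]
      nlinarith
    have h2 : s ^ 2 < (c + 1) ^ 2 := by rw [hs2]; nlinarith
    nlinarith
  intro k hk1
  induction k, hk1 using Nat.le_induction with
  | base =>
    intro _
    rw [hK1]
    push_cast
    nlinarith
  | succ k hk ih =>
    intro hk1p
    have hkp : k ≤ p := le_trans (Nat.le_succ k) hk1p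
    have hKk : 0 < K k := hKpos k hk hkp
    have hIH : K k ≤ (1 + 2 * u / (k : ℝ) ^ 2) * (c + 1 + s) := ih hkp
    have hr := hrec (k + 1) (by omega) hk1p
    rw [Nat.add_sub_cancel] at hr
    have hkr1 : (1:ℝ) ≤ (k : ℝ) := by exact_mod_cast hk
    have hlamb : 0 < c + 1 - s := by linarith
    have hlam : 0 < c + 1 + s := by nlinarith
    have hM : 0 < (1 + 2 * u / (k : ℝ) ^ 2) * (c + 1 + s) := by
      have hk2 : (0:ℝ) < (k:ℝ)^2 := by positivity
      have : (0:ℝ) < 1 + 2 * u / (k : ℝ) ^ 2 := by positivity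
      positivity
    have hA : 0 ≤ (1 - 3 / (4 * ((k : ℝ) + 1) ^ 2 - 1)) * ((c + 1 + s) * (c + 1 - s)) := by
      have hD : (0:ℝ) < 4 * ((k : ℝ) + 1) ^ 2 - 1 := by nlinarith
      have ht : 3 / (4 * ((k : ℝ) + 1) ^ 2 - 1) ≤ 1 := by
        rw [div_le_one hD]; nlinarith
      have : 0 < (c + 1 + s) * (c + 1 - s) := mul_pos hlam hlamb
      nlinarith
    have hdiv : (1 - 3 / (4 * ((k : ℝ) + 1) ^ 2 - 1)) * ((c + 1 + s) * (c + 1 - s)) /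
        ((1 + 2 * u / (k : ℝ) ^ 2) * (c + 1 + s)) ≤
        (1 - 3 / (4 * ((k : ℝ) + 1) ^ 2 - 1)) * ((c + 1 + s) * (c + 1 - s)) / K k :=
      div_le_div_of_nonneg_left hA hKk hIH
    have hkey := keyIneq u s (k : ℝ) hu1 hkr1 hsge hsu
    rw [hu2] at hkey
    push_cast
    push_cast at hr
    linarith
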